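/- Let 1 ≤ μ < ω₁. If S is μth-order guessable, then S ∈ Δ⁰_{μ+1}. -/

import Mathlib

open Filter Topology Classical

/-- The initial segment `f↾n` of an infinite sequence. -/
def res (f : ℕ → ℕ) (n : ℕ) : List ℕ := List.ofFn (fun i : Fin n => f i)

/-- `[X]`: the set of infinite sequences all of whose finite initial segments lie in `X`. -/
def seqsIn (X : Set (List ℕ)) : Set (ℕ → ℕ) := {f | ∀ n, res f n ∈ X}

/-- The simplified remainder `S_α`. -/
noncomputable def SRem (S : Set (ℕ → ℕ)) (α : Ordinal.{0}) : Set (List ℕ) :=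
  Ordinal.limitRecOn α Set.univ
    (fun _ prev => {x | x ∈ prev ∧ ∃ f g : ℕ → ℕ,
      f ∈ seqsIn prev ∧ g ∈ seqsIn prev ∧ res f x.length = x ∧ res g x.length = x ∧
      f ∈ S ∧ g ∉ S})
    (fun _ _ ih => ⋂ (β : Ordinal.{0}) (h : β < _), ih β h)

/-- Wadge's remainder `Rm_μ(A,B)`. -/
noncomputable def Rm (A B : Set (ℕ → ℕ)) (μ : Ordinal.{0}) : Set (ℕ → ℕ) :=
  if μ = 0 then Set.univ
  else ⋂ (ν : {ν : Ordinal.{0} // ν < μ}),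
    closure (Rm A B ν.1 ∩ A) ∩ closure (Rm A B ν.1 ∩ B)
termination_by μ
decreasing_by exact ν.2

/-- The least ordinal at which the simplified remainders stabilize. -/
noncomputable def alphaS (S : Set (ℕ → ℕ)) : Ordinal.{0} :=
  sInf {α | SRem S α = SRem S (α + 1)}

/-- `S_∞`, the stable value of the simplified remainders. -/
noncomputable def Sinf (S : Set (ℕ → ℕ)) : Set (List ℕ) := SRem S (alphaS S)

/-- `β(σ)`: the least ordinal `γ` with `σ ∉ S_γ`. -/
noncomputable def betaOf (S : Set (ℕ → ℕ)) (σ : List ℕ) : Ordinal.{0} :=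
  sInf {γ | σ ∉ SRem S γ}

/-- `G` guesses `S`. -/
def Guesses (G : List ℕ → Bool) (S : Set (ℕ → ℕ)) : Prop :=
  ∀ f : ℕ → ℕ, ∀ᶠ n in atTop, (G (res f n) = true ↔ f ∈ S)

def Guessable (S : Set (ℕ → ℕ)) : Prop := ∃ G, Guesses G S

/-- `G, H` witness that `S` is guessable with `< α` mind changes. -/
def WitnessMC (S : Set (ℕ → ℕ)) (α : Ordinal.{0}) (G : List ℕ → Bool)
    (H : List ℕ → Ordinal.{0}) : Prop :=
  Guesses G S ∧ (∀ σ, H σ < α) ∧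
  (∀ (f : ℕ → ℕ) (n : ℕ), H (res f (n + 1)) ≤ H (res f n)) ∧
  (∀ (f : ℕ → ℕ) (n : ℕ), G (res f (n + 1)) ≠ G (res f n) →
    H (res f (n + 1)) < H (res f n))

def GuessableMC (S : Set (ℕ → ℕ)) (α : Ordinal.{0}) : Prop := ∃ G H, WitnessMC S α G H

/-- An ordinal is even if it is of the form `λ + n` with `λ` limit or zero and `n` even. -/
def OrdEven (o : Ordinal.{0}) : Prop :=
  ∃ (l : Ordinal.{0}) (n : ℕ), (l = 0 ∨ Order.IsSuccLimit l) ∧ o = l + n ∧ Even n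

/-- The Hausdorff difference set `D_α((A_η)_{η<α})`. -/
def DSet (α : Ordinal.{0}) (A : Ordinal.{0} → Set (ℕ → ℕ)) : Set (ℕ → ℕ) :=
  {x | ∃ η, η < α ∧ x ∈ A η ∧ (∀ η', η' < η → x ∉ A η') ∧ (OrdEven η ↔ ¬ OrdEven α)}

/-- Membership in the class `D_α(Σ⁰₁)`. -/
def InDiff (α : Ordinal.{0}) (S : Set (ℕ → ℕ)) : Prop :=
  ∃ A : Ordinal.{0} → Set (ℕ → ℕ), (∀ η, η < α → IsOpen (A η)) ∧
    (∀ η η', η ≤ η' → η' < α → A η ⊆ A η') ∧ S = DSet α A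
/-- Wadge's `Rm_Ω(S)`: the stable value of `Rm_μ(S, Sᶜ)`. -/
noncomputable def RmInf (S : Set (ℕ → ℕ)) : Set (ℕ → ℕ) :=
  Rm S Sᶜ (sInf {μ : Ordinal.{0} | Rm S Sᶜ μ = Rm S Sᶜ (μ + 1)})

/-- The canonical guesser `G_S`. -/
noncomputable def GS (S : Set (ℕ → ℕ)) (σ : List ℕ) : Bool :=
  if (∃ f : ℕ → ℕ, res f σ.length = σ ∧ f ∈ seqsIn (SRem S (betaOf S σ - 1))) then
    decide (∃ f : ℕ → ℕ, res f σ.length = σ ∧ f ∈ seqsIn (SRem S (betaOf S σ - 1)) ∧ f ∈ S)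
  else if h : σ = [] then false
  else GS S σ.dropLast
termination_by σ.length
decreasing_by
  simp only [List.length_dropLast]
  exact Nat.sub_lt (List.length_pos_iff.mpr h) one_pos

/-- `S` is `F_σ`: a countable union of closed sets. -/
def IsFsigma (S : Set (ℕ → ℕ)) : Prop :=
  ∃ C : ℕ → Set (ℕ → ℕ), (∀ n, IsClosed (C n)) ∧ S = ⋃ n, C n

/-- Boolean combinations of open sets. -/
inductive BoolComb : Set (ℕ → ℕ) → Prop
  | isOpen {s : Set (ℕ → ℕ)} : IsOpen s → BoolComb s
  | compl {s : Set (ℕ → ℕ)} : BoolComb s → BoolComb sᶜ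
  | union {s t : Set (ℕ → ℕ)} : BoolComb s → BoolComb t → BoolComb (s ∪ t)

/-- The Borel class `Σ⁰_α` on Baire space (for `α ≥ 1`). -/
noncomputable def Sigma0 (α : Ordinal.{0}) : Set (Set (ℕ → ℕ)) :=
  if α = 1 then {s | IsOpen s}
  else {s | ∃ g : ℕ → Set (ℕ → ℕ), s = ⋃ n, g n ∧
    ∀ n, ∃ β : {β : Ordinal.{0} // β < α}, 1 ≤ β.1 ∧ (g n)ᶜ ∈ Sigma0 β.1}
termination_by α
decreasing_by exact β.2

/-- The ambiguous Borel class `Δ⁰_α`. -/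
noncomputable def Delta0 (α : Ordinal.{0}) : Set (Set (ℕ → ℕ)) :=
  {s | s ∈ Sigma0 α ∧ sᶜ ∈ Sigma0 α}

/-- The Boolean characteristic function. -/
noncomputable def chi (X : Set (ℕ → ℕ)) (f : ℕ → ℕ) : Bool := decide (f ∈ X)

/-- `G` guesses `S` based on the sequence of sets `Ss`. -/
def GuessesBased (G : List Bool → Bool) (Ss : ℕ → Set (ℕ → ℕ)) (S : Set (ℕ → ℕ)) : Prop :=
  ∀ f : ℕ → ℕ, ∀ᶠ n in atTop,
    (G (List.ofFn (fun i : Fin n => chi (Ss i) f)) = true ↔ f ∈ S)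

/-- `S` is `μ`th-order guessable. -/
def HigherGuessable (μ : Ordinal.{0}) (S : Set (ℕ → ℕ)) : Prop :=
  ∃ Ss : ℕ → Set (ℕ → ℕ), (∀ i, ∃ μi, μi < μ ∧ Ss i ∈ Delta0 (μi + 1)) ∧
    ∃ G : List Bool → Bool, GuessesBased G Ss S

lemma Sigma0_one : Sigma0 1 = {s | IsOpen s} := by rw [Sigma0]; simp

lemma Sigma0_ne_one (α : Ordinal.{0}) (h : α ≠ 1) : Sigma0 α = {s | ∃ g : ℕ → Set (ℕ → ℕ), s = ⋃ n, g n ∧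
    ∀ n, ∃ β : {β : Ordinal.{0} // β < α}, 1 ≤ β.1 ∧ (g n)ᶜ ∈ Sigma0 β.1} := by
  rw [Sigma0]; simp [h]

@[simp] lemma length_res (f : ℕ → ℕ) (n : ℕ) : (res f n).length = n := by simp [res]

lemma res_eq_res {f g : ℕ → ℕ} {n : ℕ} : res f n = res g n ↔ ∀ i < n, f i = g i := by
  constructor
  · intro h i hi
    have := List.ofFn_inj.mp h
    exact congrFun this ⟨i, hi⟩
  · intro h
    exact List.ofFn_inj.mpr (funext fun i => h i i.2)

/-- cylinder -/
def cyl (σ : List ℕ) : Set (ℕ → ℕ) := {f | res f σ.length = σ}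

lemma mem_cyl_res {f g : ℕ → ℕ} {n : ℕ} : g ∈ cyl (res f n) ↔ res g n = res f n := by
  simp only [cyl, Set.mem_setOf_eq, length_res]

lemma self_mem_cyl (f : ℕ → ℕ) (n : ℕ) : f ∈ cyl (res f n) := mem_cyl_res.mpr rfl

lemma isClopen_cyl (σ : List ℕ) : IsClopen (cyl σ) := by
  have : cyl σ = ⋂ i : Fin σ.length, (fun f : ℕ → ℕ => f i) ⁻¹' {σ.get i} := by
    ext f
    simp only [cyl, Set.mem_setOf_eq, Set.mem_iInter, Set.mem_preimage, Set.mem_singleton_iff]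
    constructor
    · intro h i
      obtain ⟨m, hm⟩ : ∃ m, σ.length = m := ⟨_, rfl⟩
      rw [hm] at h
      subst h
      simp [res]
      exact (List.get_ofFn (fun j : Fin m => f j) i).symm
    · intro h
      apply List.ext_get (by simp)
      intro i h1 h2
      simpa [res] using h ⟨i, h2⟩
  rw [this]
  exact ⟨isClosed_iInter fun i => (isClosed_discrete _).preimage (continuous_apply _),
    isOpen_iInter_of_finite fun i => (isOpen_discrete _).preimage (continuous_apply _)⟩

lemma exists_cyl_subset {U : Set (ℕ → ℕ)} (hU : IsOpen U) {f : ℕ → ℕ} (hf : f ∈ U) :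
    ∃ n, cyl (res f n) ⊆ U := by
  obtain ⟨I, u, hu, hsub⟩ := isOpen_pi_iff.mp hU f hf
  refine ⟨(I.sup id) + 1, fun g hg => hsub ?_⟩
  intro i hi
  have hi' : i < (I.sup id) + 1 := Nat.lt_succ_of_le (Finset.le_sup (f := id) hi)
  have : g i = f i := res_eq_res.mp (mem_cyl_res.mp hg) i hi'
  rw [this]; exact (hu i hi).2

/-- open sets are in every Sigma0 level ≥ 1 -/
lemma isOpen_mem_Sigma0 {μ : Ordinal.{0}} (hμ : 1 ≤ μ) {s : Set (ℕ → ℕ)} (hs : IsOpen s) :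
    s ∈ Sigma0 μ := by
  rcases eq_or_lt_of_le hμ with h | h
  · rw [← h, Sigma0_one]; exact hs
  · rw [Sigma0_ne_one μ (by intro e; rw [e] at h; exact lt_irrefl _ h)]
    refine ⟨fun k => if cyl (Denumerable.ofNat (List ℕ) k) ⊆ s
        then cyl (Denumerable.ofNat (List ℕ) k) else ∅, ?_, ?_⟩
    · ext f
      simp only [Set.mem_iUnion]
      constructor
      · intro hf
        obtain ⟨n, hn⟩ := exists_cyl_subset hs hf
        refine ⟨Encodable.encode (res f n), ?_⟩
        rw [Denumerable.ofNat_encode]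
        rw [if_pos hn]
        exact self_mem_cyl f n
      · rintro ⟨k, hk⟩
        split at hk
        · exact ‹_ ⊆ s› hk
        · exact absurd hk (Set.notMem_empty f)
    · intro k
      refine ⟨⟨1, h⟩, le_refl _, ?_⟩
      rw [Sigma0_one]
      dsimp only
      rw [Set.mem_setOf_eq]
      split
      · exact (isClopen_cyl _).compl.isOpen
      · simp

lemma Sigma0_mono {β μ : Ordinal.{0}} (hβ : 1 ≤ β) (hle : β ≤ μ) :
    Sigma0 β ⊆ Sigma0 μ := by
  rcases eq_or_lt_of_le hle with rfl | hlt
  · exact le_refl _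
  intro s hs
  have hμ1 : μ ≠ 1 := by
    intro e; rw [e] at hlt; exact absurd hβ (not_le.mpr hlt)
  rcases eq_or_lt_of_le hβ with h | h
  · rw [← h, Sigma0_one] at hs
    exact isOpen_mem_Sigma0 (le_of_lt (lt_of_le_of_lt hβ hlt)) hs
  · rw [Sigma0_ne_one β (by intro e; rw [e] at h; exact lt_irrefl _ h)] at hs
    rw [Sigma0_ne_one μ hμ1]
    obtain ⟨g, rfl, hg⟩ := hs
    refine ⟨g, rfl, fun n => ?_⟩
    obtain ⟨⟨β', hβ'⟩, h1, h2⟩ := hg n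
    exact ⟨⟨β', lt_trans hβ' hlt⟩, h1, h2⟩

lemma Sigma0_iUnion {μ : Ordinal.{0}} (hμ : 1 ≤ μ) {s : ℕ → Set (ℕ → ℕ)}
    (hs : ∀ n, s n ∈ Sigma0 μ) : (⋃ n, s n) ∈ Sigma0 μ := by
  rcases eq_or_lt_of_le hμ with h | h
  · rw [← h, Sigma0_one] at hs ⊢
    exact isOpen_iUnion fun n => Set.mem_setOf_eq ▸ hs n
  have hμ1 : μ ≠ 1 := by intro e; rw [e] at h; exact lt_irrefl _ h
  rw [Sigma0_ne_one μ hμ1] at hs ⊢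
  choose g hg hw using hs
  refine ⟨fun k => g k.unpair.1 k.unpair.2, ?_, fun k => hw _ _⟩
  ext f
  simp only [Set.mem_iUnion]
  constructor
  · rintro ⟨n, hn⟩
    rw [hg n] at hn
    obtain ⟨m, hm⟩ := Set.mem_iUnion.mp hn
    exact ⟨Nat.pair n m, by simpa [Nat.unpair_pair] using hm⟩
  · rintro ⟨k, hk⟩
    exact ⟨k.unpair.1, by rw [hg]; exact Set.mem_iUnion.mpr ⟨k.unpair.2, hk⟩⟩

lemma Sigma0_empty {μ : Ordinal.{0}} (hμ : 1 ≤ μ) : (∅ : Set (ℕ → ℕ)) ∈ Sigma0 μ :=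
  isOpen_mem_Sigma0 hμ isOpen_empty

lemma Sigma0_univ {μ : Ordinal.{0}} (hμ : 1 ≤ μ) : (Set.univ : Set (ℕ → ℕ)) ∈ Sigma0 μ :=
  isOpen_mem_Sigma0 hμ isOpen_univ

lemma Sigma0_union {μ : Ordinal.{0}} (hμ : 1 ≤ μ) {s t : Set (ℕ → ℕ)}
    (hs : s ∈ Sigma0 μ) (ht : t ∈ Sigma0 μ) : s ∪ t ∈ Sigma0 μ := by
  have : s ∪ t = ⋃ n : ℕ, (if n = 0 then s else if n = 1 then t else ∅) := by
    ext f
    simp only [Set.mem_union, Set.mem_iUnion]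
    constructor
    · rintro (h | h)
      · exact ⟨0, by simpa⟩
      · exact ⟨1, by simpa⟩
    · rintro ⟨n, hn⟩
      split at hn
      · exact Or.inl hn
      · split at hn
        · exact Or.inr hn
        · exact absurd hn (Set.notMem_empty f)
  rw [this]
  refine Sigma0_iUnion hμ fun n => ?_
  split
  · exact hs
  · split
    · exact ht
    · exact Sigma0_empty hμ

lemma Sigma0_inter {μ : Ordinal.{0}} (hμ : 1 ≤ μ) {s t : Set (ℕ → ℕ)}
    (hs : s ∈ Sigma0 μ) (ht : t ∈ Sigma0 μ) : s ∩ t ∈ Sigma0 μ := by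
  rcases eq_or_lt_of_le hμ with h | h
  · rw [← h, Sigma0_one] at hs ht ⊢
    exact IsOpen.inter (Set.mem_setOf_eq ▸ hs) (Set.mem_setOf_eq ▸ ht)
  have hμ1 : μ ≠ 1 := by intro e; rw [e] at h; exact lt_irrefl _ h
  rw [Sigma0_ne_one μ hμ1] at hs ht ⊢
  obtain ⟨g, rfl, hg⟩ := hs
  obtain ⟨g', rfl, hg'⟩ := ht
  refine ⟨fun k => g k.unpair.1 ∩ g' k.unpair.2, ?_, fun k => ?_⟩
  · ext f
    simp only [Set.mem_inter_iff, Set.mem_iUnion]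
    constructor
    · rintro ⟨⟨n, hn⟩, ⟨m, hm⟩⟩
      exact ⟨Nat.pair n m, by simpa [Nat.unpair_pair] using ⟨hn, hm⟩⟩
    · rintro ⟨k, hk1, hk2⟩
      exact ⟨⟨_, hk1⟩, ⟨_, hk2⟩⟩
  · obtain ⟨⟨β1, hβ1⟩, hb1, hc1⟩ := hg k.unpair.1
    obtain ⟨⟨β2, hβ2⟩, hb2, hc2⟩ := hg' k.unpair.2
    refine ⟨⟨max β1 β2, max_lt hβ1 hβ2⟩, le_trans hb1 (le_max_left _ _), ?_⟩
    rw [Set.compl_inter]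
    exact Sigma0_union (le_trans hb1 (le_max_left _ _))
      (Sigma0_mono hb1 (le_max_left _ _) hc1)
      (Sigma0_mono hb2 (le_max_right _ _) hc2)

lemma Sigma0_biUnion_finset {μ : Ordinal.{0}} (hμ : 1 ≤ μ) {ι : Type*} (t : Finset ι)
    {A : ι → Set (ℕ → ℕ)} (hA : ∀ i ∈ t, A i ∈ Sigma0 μ) : (⋃ i ∈ t, A i) ∈ Sigma0 μ := by
  classical
  induction t using Finset.induction with
  | empty => simpa using Sigma0_empty hμ
  | insert _ _ hni ih =>
      rw [Finset.set_biUnion_insert]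
      exact Sigma0_union hμ (hA _ (Finset.mem_insert_self _ _))
        (ih fun i hi => hA i (Finset.mem_insert_of_mem hi))

lemma Sigma0_biInter_finset {μ : Ordinal.{0}} (hμ : 1 ≤ μ) {ι : Type*} (t : Finset ι)
    {A : ι → Set (ℕ → ℕ)} (hA : ∀ i ∈ t, A i ∈ Sigma0 μ) : (⋂ i ∈ t, A i) ∈ Sigma0 μ := by
  classical
  induction t using Finset.induction with
  | empty => simpa using Sigma0_univ hμ
  | insert _ _ hni ih =>
      rw [Finset.set_biInter_insert]
      exact Sigma0_inter hμ (hA _ (Finset.mem_insert_self _ _))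
        (ih fun i hi => hA i (Finset.mem_insert_of_mem hi))

lemma mem_Sigma0_pattern {μ : Ordinal.{0}} (hμ : 1 ≤ μ) (Ss : ℕ → Set (ℕ → ℕ))
    (hSs : ∀ i, Ss i ∈ Sigma0 μ ∧ (Ss i)ᶜ ∈ Sigma0 μ) (n : ℕ) (P : (Fin n → Bool) → Prop) :
    {f | P (fun i => chi (Ss i) f)} ∈ Sigma0 μ := by
  classical
  have key : {f | P (fun i => chi (Ss i) f)} =
      ⋃ s ∈ Finset.univ.filter (fun s : Fin n → Bool => P s),
        ⋂ i ∈ (Finset.univ : Finset (Fin n)), (if s i then Ss i else (Ss i)ᶜ) := by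
    ext f
    simp only [Set.mem_setOf_eq, Set.mem_iUnion, Set.mem_iInter, Finset.mem_filter,
      Finset.mem_univ, true_and, exists_prop]
    constructor
    · intro h
      refine ⟨fun i => chi (Ss i) f, h, fun i _ => ?_⟩
      by_cases hf : f ∈ Ss i
      · simp [chi, hf]
      · simp [chi, hf]
    · rintro ⟨s, hs, hmem⟩
      have hse : (fun i : Fin n => chi (Ss i) f) = s := by
        funext i
        have hi := hmem i trivial
        cases hsi : s i with
        | false =>
            rw [hsi] at hi
            simp only [Bool.false_eq_true, if_false] at hi
            simpa [chi] using hi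
        | true =>
            rw [hsi] at hi
            simp only [if_true] at hi
            simpa [chi] using hi
      rw [hse]; exact hs
  rw [key]
  refine Sigma0_biUnion_finset hμ _ fun s _ => ?_
  refine Sigma0_biInter_finset hμ _ fun i _ => ?_
  split
  · exact (hSs i).1
  · exact (hSs i).2

theorem stmt14 (μ : Ordinal.{0}) (h1 : 1 ≤ μ) (h2 : μ < (Cardinal.aleph 1).ord)
    (S : Set (ℕ → ℕ)) (hS : HigherGuessable μ S) : S ∈ Delta0 (μ + 1) := by
  obtain ⟨Ss, hSs, G, hG⟩ := hS
  -- each Ss i and its complement lie in Sigma0 μ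
  have hSs' : ∀ i, Ss i ∈ Sigma0 μ ∧ (Ss i)ᶜ ∈ Sigma0 μ := by
    intro i
    obtain ⟨μi, hμi, hmem⟩ := hSs i
    have h1' : (1 : Ordinal.{0}) ≤ μi + 1 := by
      simpa using add_le_add_right (Ordinal.zero_le μi) 1
    have hle : μi + 1 ≤ μ := by
      rw [Ordinal.add_one_eq_succ, Order.succ_le_iff]; exact hμi
    exact ⟨Sigma0_mono h1' hle hmem.1, Sigma0_mono h1' hle hmem.2⟩
  set B : ℕ → Set (ℕ → ℕ) :=
    fun n => {f | G (List.ofFn (fun i : Fin n => chi (Ss i) f)) = true} with hBdef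
  have hB : ∀ n, B n ∈ Sigma0 μ :=
    fun n => mem_Sigma0_pattern h1 Ss hSs' n (fun s => G (List.ofFn s) = true)
  have hBc : ∀ n, (B n)ᶜ ∈ Sigma0 μ := by
    intro n
    have : (B n)ᶜ = {f | ¬ (G (List.ofFn (fun i : Fin n => chi (Ss i) f)) = true)} := rfl
    rw [this]
    exact mem_Sigma0_pattern h1 Ss hSs' n (fun s => ¬ (G (List.ofFn s) = true))
  have hmuone : μ + 1 ≠ 1 := by
    intro e
    have : μ < μ + 1 := by rw [Ordinal.add_one_eq_succ]; exact Order.lt_succ μ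
    rw [e] at this
    exact absurd h1 (not_le.mpr this)
  have hmule : μ ≤ μ + 1 := le_of_lt (by rw [Ordinal.add_one_eq_succ]; exact Order.lt_succ μ)
  have hmult : μ < μ + 1 := by rw [Ordinal.add_one_eq_succ]; exact Order.lt_succ μ
  constructor
  · -- S ∈ Sigma0 (μ+1)
    rw [Sigma0_ne_one _ hmuone]
    refine ⟨fun N => ⋂ n, B (N + n), ?_, fun N => ?_⟩
    · ext f
      simp only [Set.mem_iUnion, Set.mem_iInter]
      constructor
      · intro hf
        obtain ⟨N, hN⟩ := eventually_atTop.mp (hG f)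
        exact ⟨N, fun n => (hN (N + n) (Nat.le_add_right _ _)).mpr hf⟩
      · rintro ⟨N, hN⟩
        obtain ⟨N', hN'⟩ := eventually_atTop.mp (hG f)
        have h3 := hN (max N N' - N)
        rw [Nat.add_sub_cancel' (le_max_left N N')] at h3
        exact (hN' (max N N') (le_max_right N N')).mp h3
    · refine ⟨⟨μ, hmult⟩, h1, ?_⟩
      rw [Set.compl_iInter]
      exact Sigma0_iUnion h1 fun n => hBc (N + n)
  · -- Sᶜ ∈ Sigma0 (μ+1)
    rw [Sigma0_ne_one _ hmuone]
    refine ⟨fun N => ⋂ n, (B (N + n))ᶜ, ?_, fun N => ?_⟩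
    · ext f
      simp only [Set.mem_iUnion, Set.mem_iInter, Set.mem_compl_iff]
      constructor
      · intro hf
        obtain ⟨N, hN⟩ := eventually_atTop.mp (hG f)
        refine ⟨N, fun n hBn => hf ((hN (N + n) (Nat.le_add_right _ _)).mp hBn)⟩
      · rintro ⟨N, hN⟩ hfS
        obtain ⟨N', hN'⟩ := eventually_atTop.mp (hG f)
        have h3 := hN (max N N' - N)
        rw [Nat.add_sub_cancel' (le_max_left N N')] at h3
        exact h3 ((hN' (max N N') (le_max_right N N')).mpr hfS)
    · refine ⟨⟨μ, hmult⟩, h1, ?_⟩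
      rw [Set.compl_iInter]
      simp only [compl_compl]
      exact Sigma0_iUnion h1 fun n => hB (N + n)
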